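/- Let g : [-1,1] → [-1,1] be a continuous increasing function such that g(x) > x holds if and only if x ∈ (-1,1) (hence g(-1) = -1 and g(1) = 1). Then ([-1,1],g) is a factor of a finite automaton. -/

import Mathlib

open Set Function Topology

/-- The ω-limit set of a set `A` under `f`: `ω(A) = ⋂ₙ closure (⋃_{m>n} f^m(A))`. -/
def omegaSet {X : Type*} [TopologicalSpace X] (f : X → X) (A : Set X) : Set X :=
  ⋂ n : ℕ, closure (⋃ m : ℕ, ⋃ _ : n < m, f^[m] '' A)

/-- A dynamical system is chaotic if its periodic points are dense and it is
topologically transitive. -/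
def IsChaotic {X : Type*} [TopologicalSpace X] (f : X → X) : Prop :=
  Dense {x : X | ∃ n : ℕ, 0 < n ∧ f^[n] x = x} ∧
  ∀ U V : Set X, IsOpen U → IsOpen V → U.Nonempty → V.Nonempty →
    ∃ k : ℕ, 0 < k ∧ (f^[k] '' U ∩ V).Nonempty

/-- `f` restricted to the invariant set `S` is a chaotic dynamical system. -/
def ChaoticOn {X : Type*} [TopologicalSpace X] (f : X → X) (S : Set X) : Prop :=
  ∃ h : MapsTo f S S, IsChaotic (MapsTo.restrict f S S h)

/-- A system has chaotic limits if every point belongs to a set whose ω-limit set is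
a chaotic system. -/
def HasChaoticLimits {X : Type*} [TopologicalSpace X] (f : X → X) : Prop :=
  ∀ x : X, ∃ A : Set X, x ∈ A ∧ ChaoticOn f (omegaSet f A)
/-- The discontinuum over `A, Q, B`: two-sided sequences with letters from `A` at
positive coordinates, a letter from `Q` at coordinate `0`, and letters from `B` at
negative coordinates. -/
def Discontinuum (A Q B : Type*) : Type _ :=
  {u : ℤ → A ⊕ Q ⊕ B //
    (∀ i : ℤ, 0 < i → ∃ a : A, u i = Sum.inl a) ∧
    (∃ q : Q, u 0 = Sum.inr (Sum.inl q)) ∧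
    (∀ i : ℤ, i < 0 → ∃ b : B, u i = Sum.inr (Sum.inr b))}

/-- The topology of the discontinuum: the product topology of the discrete topologies,
i.e. the topology of the metric ρ(u,v) = 2^{-inf{i ≥ 0 : uᵢ ≠ vᵢ or u₋ᵢ ≠ v₋ᵢ}}. -/
instance (A Q B : Type*) : TopologicalSpace (Discontinuum A Q B) := by
  letI : TopologicalSpace (A ⊕ Q ⊕ B) := ⊥
  unfold Discontinuum
  infer_instance

/-- The inner state of the automaton, i.e. the coordinate `u 0`. -/
noncomputable def Discontinuum.state {A Q B : Type*} (u : Discontinuum A Q B) : Q :=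
  u.2.2.1.choose

/-- The next input symbol, i.e. the coordinate `u 1`. -/
noncomputable def Discontinuum.input {A Q B : Type*} (u : Discontinuum A Q B) : A :=
  (u.2.1 1 one_pos).choose

/-- The dynamical system of a finite automaton with input function `fA` and output
function `fB`: it reads a symbol from the input tape, changes its state, and writes
a symbol to the output tape. -/
noncomputable def autMap {A Q B : Type*} (fA : Q × A → Q) (fB : Q → B)
    (u : Discontinuum A Q B) : Discontinuum A Q B :=
  ⟨fun i =>
    if i = -1 then Sum.inr (Sum.inr (fB u.state))
    else if i = 0 then Sum.inr (Sum.inl (fA (u.state, u.input)))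
    else u.1 (i + 1), by
      refine ⟨fun i hi => ?_, ?_, fun i hi => ?_⟩
      · beta_reduce
        rw [if_neg (by omega), if_neg (by omega)]
        exact u.2.1 (i + 1) (by omega)
      · exact ⟨fA (u.state, u.input), by beta_reduce; rw [if_neg (by norm_num), if_pos rfl]⟩
      · by_cases h : i = -1
        · exact ⟨fB u.state, by beta_reduce; rw [if_pos h]⟩
        · beta_reduce
          rw [if_neg h, if_neg (by omega)]
          exact u.2.2.2 (i + 1) (by omega)⟩

/-- A dynamical system `g` is a factor of a finite automaton if there are nonempty
finite sets `A, Q, B`, input and output functions `fA, fB`, and a continuous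
surjection `φ` from the corresponding finite automaton onto `(Y, g)` with
`g ∘ φ = φ ∘ f`. -/
def IsFactorOfFiniteAutomaton {Y : Type*} [TopologicalSpace Y] (g : Y → Y) : Prop :=
  ∃ (A Q B : Type) (_ : Fintype A) (_ : Fintype Q) (_ : Fintype B)
    (_ : Nonempty A) (_ : Nonempty Q) (_ : Nonempty B)
    (fA : Q × A → Q) (fB : Q → B) (φ : Discontinuum A Q B → Y),
    Continuous φ ∧ Surjective φ ∧ g ∘ φ = φ ∘ autMap fA fB


open Filter

noncomputable def TT (b : ℕ → Bool) : ℝ := ∑' i, (cond (b i) ((1/2:ℝ)^(i+1)) 0)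

lemma summable_w : Summable (fun i : ℕ => (1/2:ℝ)^(i+1)) := by
  have := summable_geometric_two.mul_left (1/2:ℝ)
  simpa [pow_succ, mul_comm, one_div] using this

lemma summable_TT (b : ℕ → Bool) : Summable (fun i => cond (b i) ((1/2:ℝ)^(i+1)) 0) := by
  refine Summable.of_nonneg_of_le (fun i => ?_) (fun i => ?_) summable_w
  · cases b i <;> simp <;> positivity
  · cases b i <;> simp <;> positivity

lemma tsum_w : ∑' i : ℕ, (1/2:ℝ)^(i+1) = 1 := by
  have h := tsum_geometric_two' 1
  have : (fun n : ℕ => (1:ℝ) / 2 / 2 ^ n) = fun n : ℕ => (1/2:ℝ)^(n+1) := by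
    funext n; rw [pow_succ, one_div, inv_pow]; ring
  rw [this] at h; exact h

lemma TT_nonneg (b : ℕ → Bool) : 0 ≤ TT b :=
  tsum_nonneg (fun i => by cases b i <;> simp <;> positivity)

lemma TT_le_one (b : ℕ → Bool) : TT b ≤ 1 := by
  rw [← tsum_w]
  refine Summable.tsum_le_tsum (fun i => ?_) (summable_TT b) summable_w
  cases b i <;> simp <;> positivity

lemma TT_cont : Continuous TT := by
  refine continuous_tsum (fun i => ?_) summable_w (fun i x => ?_)
  · exact (continuous_of_discreteTopology
      (f := fun t : Bool => cond t ((1/2:ℝ)^(i+1)) 0)).comp (continuous_apply i)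
  · cases x i <;> simp [Real.norm_eq_abs, abs_of_nonneg] <;> positivity

lemma TT_surj {t : ℝ} (h0 : 0 ≤ t) (h1 : t ≤ 1) : ∃ b : ℕ → Bool, TT b = t := by
  classical
  -- greedy partial sums
  let S : ℕ → ℝ := fun n => Nat.rec 0 (fun n s => s + (if s + (1/2:ℝ)^(n+1) ≤ t then (1/2:ℝ)^(n+1) else 0)) n
  have hS0 : S 0 = 0 := rfl
  have hSs : ∀ n, S (n+1) = S n + (if S n + (1/2:ℝ)^(n+1) ≤ t then (1/2:ℝ)^(n+1) else 0) := fun n => rfl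
  have hinv : ∀ n, S n ≤ t ∧ t ≤ S n + (1/2:ℝ)^n := by
    intro n; induction n with
    | zero => simpa [hS0] using ⟨h0, h1⟩
    | succ n ih =>
      rw [hSs n]
      by_cases h : S n + (1/2:ℝ)^(n+1) ≤ t
      · rw [if_pos h]
        refine ⟨h, ?_⟩
        have : (1/2:ℝ)^n = (1/2:ℝ)^(n+1) + (1/2:ℝ)^(n+1) := by rw [pow_succ]; ring
        nlinarith [ih.2]
      · rw [if_neg h]; push_neg at h
        refine ⟨by linarith [ih.1], by linarith⟩
  let b : ℕ → Bool := fun n => decide (S n + (1/2:ℝ)^(n+1) ≤ t)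
  have hpartial : ∀ n, ∑ i ∈ Finset.range n, (cond (b i) ((1/2:ℝ)^(i+1)) 0) = S n := by
    intro n; induction n with
    | zero => simp [hS0]
    | succ n ih =>
      rw [Finset.sum_range_succ, ih, hSs n]
      by_cases h : S n + (1/2:ℝ)^(n+1) ≤ t
      · simp [b, h]
      · simp [b, h]
  have hhs : HasSum (fun i => cond (b i) ((1/2:ℝ)^(i+1)) 0) (TT b) := (summable_TT b).hasSum
  have h2 : Tendsto S atTop (𝓝 (TT b)) := by
    have h := hhs.tendsto_sum_nat
    have he : (fun n => ∑ i ∈ Finset.range n, (cond (b i) ((1/2:ℝ)^(i+1)) 0)) = S := funext hpartial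
    rwa [he] at h
  have h3 : Tendsto S atTop (𝓝 t) := by
    have hd : Tendsto (fun n => S n - t) atTop (𝓝 0) := by
      refine squeeze_zero_norm (fun n => ?_) (tendsto_pow_atTop_nhds_zero_of_lt_one (by norm_num) (by norm_num : (1/2:ℝ) < 1))
      have h := hinv n
      rw [Real.norm_eq_abs, abs_le]
      constructor <;> nlinarith [h.1, h.2]
    have := hd.add_const t
    simpa using this
  exact ⟨b, tendsto_nhds_unique h2 h3⟩

abbrev II : Type := ↥(Set.Icc (-1:ℝ) 1)

noncomputable def lo : II := ⟨-1, by norm_num⟩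
noncomputable def hi : II := ⟨1, by norm_num⟩
noncomputable def xz : II := ⟨0, by norm_num⟩

noncomputable def pw (E : II ≃ II) (n : ℤ) : Equiv.Perm II := (E : Equiv.Perm II) ^ n

section PW
variable (E : II ≃ II)

lemma pw_zero (y : II) : pw E 0 y = y := by
  rw [pw, zpow_zero]; rfl

lemma pw_succ (n : ℤ) (y : II) : pw E (n+1) y = E (pw E n y) := by
  rw [pw, pw, show n + 1 = 1 + n from add_comm n 1, zpow_one_add, Equiv.Perm.mul_apply]

lemma pw_pred (n : ℤ) (y : II) : pw E (n-1) y = E.symm (pw E n y) := by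
  have h := pw_succ E (n-1) y
  rw [sub_add_cancel] at h
  rw [h, Equiv.symm_apply_apply]

lemma pw_add (a b : ℤ) (y : II) : pw E a (pw E b y) = pw E (a+b) y := by
  rw [pw, pw, pw, ← Equiv.Perm.mul_apply, ← zpow_add]

lemma pw_cancel (n : ℤ) (y : II) : pw E (-n) (pw E n y) = y := by
  rw [pw_add, neg_add_cancel, pw_zero]

lemma sm_symm (e : II ≃ II) (h : StrictMono ⇑e) : StrictMono ⇑e.symm := by
  intro a b hab
  rw [← h.lt_iff_lt, Equiv.apply_symm_apply, Equiv.apply_symm_apply]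
  exact hab

lemma pw_lo (hlo : E lo = lo) (n : ℤ) : pw E n lo = lo := by
  induction n using Int.induction_on with
  | zero => exact pw_zero E lo
  | succ i ih => rw [pw_succ, ih, hlo]
  | pred i ih => rw [show (-(i:ℤ) - 1) = (-(i:ℤ)) - 1 from rfl, pw_pred, ih,
      Equiv.symm_apply_eq]; exact hlo.symm

lemma pw_hi (hhi : E hi = hi) (n : ℤ) : pw E n hi = hi := by
  induction n using Int.induction_on with
  | zero => exact pw_zero E hi
  | succ i ih => rw [pw_succ, ih, hhi]
  | pred i ih => rw [show (-(i:ℤ) - 1) = (-(i:ℤ)) - 1 from rfl, pw_pred, ih,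
      Equiv.symm_apply_eq]; exact hhi.symm

lemma pw_strictMono (hSM : StrictMono ⇑E) (n : ℤ) : StrictMono ⇑(pw E n) := by
  induction n using Int.induction_on with
  | zero => intro a b hab; rw [pw_zero, pw_zero]; exact hab
  | succ i ih => intro a b hab; rw [pw_succ, pw_succ]; exact hSM (ih hab)
  | pred i ih =>
      intro a b hab
      rw [show (-(i:ℤ) - 1) = (-(i:ℤ)) - 1 from rfl, pw_pred, pw_pred]
      exact sm_symm E hSM (ih hab)

lemma pw_continuous (hcontE : Continuous ⇑E) (n : ℤ) : Continuous ⇑(pw E n) := by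
  haveI : CompactSpace II := by infer_instance
  have hsymm : Continuous ⇑E.symm := (hcontE.homeoOfEquivCompactToT2 (f := E)).symm.continuous
  induction n using Int.induction_on with
  | zero => have : ⇑(pw E 0) = id := funext fun y => pw_zero E y
            rw [this]; exact continuous_id
  | succ i ih => have : ⇑(pw E ((i:ℤ)+1)) = ⇑E ∘ ⇑(pw E i) := funext fun y => pw_succ E i y
                 rw [this]; exact hcontE.comp ih
  | pred i ih => have : ⇑(pw E (-(i:ℤ)-1)) = ⇑E.symm ∘ ⇑(pw E (-(i:ℤ))) :=
                   funext fun y => pw_pred E (-(i:ℤ)) y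
                 rw [this]; exact hsymm.comp ih

noncomputable def xx (n : ℤ) : II := pw E n xz

lemma xx_succ (n : ℤ) : xx E (n+1) = E (xx E n) := pw_succ E n xz

lemma xx_ne_lo (hlo : E lo = lo) (n : ℤ) : xx E n ≠ lo := by
  intro h
  have : pw E n xz = pw E n lo := h.trans (pw_lo E hlo n).symm
  have := (pw E n).injective this
  rw [Subtype.ext_iff] at this
  norm_num [xz, lo] at this

lemma xx_ne_hi (hhi : E hi = hi) (n : ℤ) : xx E n ≠ hi := by
  intro h
  have : pw E n xz = pw E n hi := h.trans (pw_hi E hhi n).symm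
  have := (pw E n).injective this
  rw [Subtype.ext_iff] at this
  norm_num [xz, hi] at this

lemma xx_strictMono (hlo : E lo = lo) (hhi : E hi = hi)
    (hup : ∀ y : II, y ≠ lo → y ≠ hi → y < E y) : StrictMono (xx E) := by
  apply strictMono_int_of_lt_succ
  intro n
  rw [xx_succ]
  exact hup _ (xx_ne_lo E hlo n) (xx_ne_hi E hhi n)

noncomputable def Psi (b : ℕ → Bool) : II :=
  ⟨(xx E 0).1 + ((xx E 1).1 - (xx E 0).1) * TT b, by
    have h0 := TT_nonneg b
    have h1 := TT_le_one b
    have ha := (xx E 0).2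
    have hb := (xx E 1).2
    rw [Set.mem_Icc] at ha hb ⊢
    constructor <;> nlinarith [ha.1, ha.2, hb.1, hb.2]⟩

lemma Psi_continuous : Continuous (Psi E) := by
  apply Continuous.subtype_mk
  exact continuous_const.add (continuous_const.mul TT_cont)

lemma Psi_mem (hx01 : (xx E 0).1 ≤ (xx E 1).1) (b : ℕ → Bool) :
    xx E 0 ≤ Psi E b ∧ Psi E b ≤ xx E 1 := by
  have h0 := TT_nonneg b
  have h1 := TT_le_one b
  constructor <;> rw [← Subtype.coe_le_coe] <;> show _ ≤ _ <;> simp only [Psi] <;> nlinarith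

lemma Psi_surj (hlt : (xx E 0).1 < (xx E 1).1) (y : II)
    (h0 : xx E 0 ≤ y) (h1 : y ≤ xx E 1) : ∃ b, Psi E b = y := by
  set pa := (xx E 0).1
  set pb := (xx E 1).1
  have h0' : pa ≤ y.1 := h0
  have h1' : y.1 ≤ pb := h1
  obtain ⟨b, hb⟩ := TT_surj (t := (y.1 - pa)/(pb - pa))
    (div_nonneg (by linarith) (by linarith)) (by rw [div_le_one (by linarith)]; linarith)
  refine ⟨b, Subtype.ext ?_⟩
  show pa + (pb - pa) * TT b = y.1
  rw [hb, mul_div_cancel₀ _ (by linarith : pb - pa ≠ 0)]; ring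

lemma exists_high (hcontE : Continuous ⇑E) (hlo : E lo = lo) (hhi : E hi = hi)
    (hup : ∀ y : II, y ≠ lo → y ≠ hi → y < E y)
    {ε : ℝ} (hε : 0 < ε) : ∃ N : ℕ, 1 - ε < (xx E N).1 := by
  have hxsm := xx_strictMono E hlo hhi hup
  set s : ℕ → ℝ := fun n => (xx E n).1 with hs
  have hmono : Monotone s := fun a b hab =>
    Subtype.coe_le_coe.2 (hxsm.monotone (by exact_mod_cast hab))
  have hbdd : BddAbove (range s) := ⟨1, by rintro _ ⟨n, rfl⟩; exact (xx E n).2.2⟩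
  have hL : Tendsto s atTop (𝓝 (⨆ n, s n)) := tendsto_atTop_ciSup hmono hbdd
  set L := ⨆ n, s n with hLdef
  have hs0 : s 0 = 0 := by
    show (xx E 0).1 = 0
    rw [show xx E 0 = xz from pw_zero E xz]
    rfl
  have hL0 : (0:ℝ) ≤ L := hs0 ▸ le_ciSup hbdd 0
  have hL1 : L ≤ 1 := ciSup_le (fun n => (xx E n).2.2)
  by_cases hcase : L = 1
  · have h : 1 - ε < L := by rw [hcase]; linarith
    obtain ⟨N, hN⟩ := exists_lt_of_lt_ciSup (f := s) (hLdef ▸ h)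
    exact ⟨N, hN⟩
  · exfalso
    have hmem : L ∈ Set.Icc (-1:ℝ) 1 := ⟨by linarith, hL1⟩
    set yL : II := ⟨L, hmem⟩
    have hsy : Tendsto (fun n : ℕ => xx E n) atTop (𝓝 yL) := tendsto_subtype_rng.2 hL
    have h2 : Tendsto (fun n : ℕ => E (xx E n)) atTop (𝓝 (E yL)) :=
      (hcontE.tendsto yL).comp hsy
    have h3 : (fun n : ℕ => E (xx E n)) = fun n : ℕ => xx E ((n:ℤ)+1) :=
      funext fun n => (xx_succ E n).symm
    have h4 : Tendsto (fun n : ℕ => xx E ((n:ℤ)+1)) atTop (𝓝 yL) := by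
      have h5 := hsy.comp (tendsto_add_atTop_nat 1)
      have : ((fun n : ℕ => xx E n) ∘ fun a => a + 1) = fun n : ℕ => xx E ((n:ℤ)+1) := by
        funext n; simp only [comp_apply]; norm_num
      rwa [this] at h5
    have hfix : E yL = yL := tendsto_nhds_unique (h3 ▸ h2) h4
    have hne_lo : yL ≠ lo := by
      intro h; rw [Subtype.ext_iff] at h; simp only [lo] at h; norm_num [yL] at h; linarith [hL0, h]
    have hne_hi : yL ≠ hi := by
      intro h; rw [Subtype.ext_iff] at h; exact hcase h
    exact (hup yL hne_lo hne_hi).ne' hfix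

lemma exists_low (hcontE : Continuous ⇑E) (hlo : E lo = lo) (hhi : E hi = hi)
    (hup : ∀ y : II, y ≠ lo → y ≠ hi → y < E y)
    {ε : ℝ} (hε : 0 < ε) : ∃ N : ℕ, (xx E (-(N:ℤ))).1 < -1 + ε := by
  have hxsm := xx_strictMono E hlo hhi hup
  set s : ℕ → ℝ := fun n => (xx E (-(n:ℤ))).1 with hs
  have hanti : Antitone s := fun a b hab =>
    Subtype.coe_le_coe.2 (hxsm.monotone (by omega : (-(b:ℤ)) ≤ -(a:ℤ)))
  have hbdd : BddBelow (range s) := ⟨-1, by rintro _ ⟨n, rfl⟩; exact (xx E (-(n:ℤ))).2.1⟩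
  have hL : Tendsto s atTop (𝓝 (⨅ n, s n)) := tendsto_atTop_ciInf hanti hbdd
  set M := ⨅ n, s n with hMdef
  have hs0 : s 0 = 0 := by
    show (xx E (-(0:ℤ))).1 = 0
    rw [show (-(0:ℤ)) = 0 from rfl, show xx E 0 = xz from pw_zero E xz]
    rfl
  have hM0 : M ≤ 0 := hs0 ▸ ciInf_le hbdd 0
  have hM1 : (-1:ℝ) ≤ M := le_ciInf (fun n => (xx E (-(n:ℤ))).2.1)
  by_cases hcase : M = -1
  · have h : M < -1 + ε := by rw [hcase]; linarith
    obtain ⟨N, hN⟩ := exists_lt_of_ciInf_lt (f := s) (hMdef ▸ h)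
    exact ⟨N, hN⟩
  · exfalso
    have hmem : M ∈ Set.Icc (-1:ℝ) 1 := ⟨hM1, by linarith⟩
    set yM : II := ⟨M, hmem⟩
    have hsy : Tendsto (fun n : ℕ => xx E (-(n:ℤ))) atTop (𝓝 yM) := tendsto_subtype_rng.2 hL
    have h2 : Tendsto (fun n : ℕ => E (xx E (-((n:ℤ)+1)))) atTop (𝓝 (E yM)) := by
      have h5 := hsy.comp (tendsto_add_atTop_nat 1)
      have he : ((fun n : ℕ => xx E (-(n:ℤ))) ∘ fun a => a + 1)
          = fun n : ℕ => xx E (-((n:ℤ)+1)) := by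
        funext n; simp only [comp_apply]; norm_num
      rw [he] at h5
      exact (hcontE.tendsto yM).comp h5
    have h3 : (fun n : ℕ => E (xx E (-((n:ℤ)+1)))) = fun n : ℕ => xx E (-(n:ℤ)) := by
      funext n
      have := xx_succ E (-((n:ℤ)+1))
      rw [show (-((n:ℤ)+1) + 1) = -(n:ℤ) by ring] at this
      exact this.symm
    have hfix : E yM = yM := tendsto_nhds_unique (h3 ▸ h2) hsy
    have hne_hi : yM ≠ hi := by
      intro h; rw [Subtype.ext_iff] at h; simp only [hi] at h; norm_num [yM] at h; linarith [hM0, h]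
    have hne_lo : yM ≠ lo := by
      intro h; rw [Subtype.ext_iff] at h; exact hcase h
    exact (hup yM hne_lo hne_hi).ne' hfix

end PW


lemma isOpen_coordEq {A Q B : Type*} (j : ℤ) (s : A ⊕ Q ⊕ B) :
    IsOpen {v : Discontinuum A Q B | v.1 j = s} := by
  letI : TopologicalSpace (A ⊕ Q ⊕ B) := ⊥
  haveI : DiscreteTopology (A ⊕ Q ⊕ B) := ⟨rfl⟩
  have h : @IsOpen (Discontinuum A Q B)
      (TopologicalSpace.induced (Subtype.val) inferInstance)
      {v : Discontinuum A Q B | v.1 j = s} := by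
    rw [isOpen_induced_iff]
    exact ⟨(fun w : ℤ → A ⊕ Q ⊕ B => w j) ⁻¹' {s},
      (continuous_apply j).isOpen_preimage _ (isOpen_discrete _), rfl⟩
  exact h

lemma continuous_coordF {A Q B : Type*} {Z : Type*} [TopologicalSpace Z] [DiscreteTopology Z]
    (j : ℤ) (F : A ⊕ Q ⊕ B → Z) : Continuous (fun v : Discontinuum A Q B => F (v.1 j)) := by
  rw [continuous_discrete_rng]
  intro z
  have : (fun v : Discontinuum A Q B => F (v.1 j)) ⁻¹' {z}
      = ⋃ s ∈ {s | F s = z}, {v : Discontinuum A Q B | v.1 j = s} := by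
    ext v; simp
  rw [this]
  exact isOpen_biUnion (fun s _ => isOpen_coordEq j s)

lemma eventually_coords {A Q B : Type*} (u : Discontinuum A Q B) (S : Finset ℤ) :
    ∀ᶠ v in 𝓝 u, ∀ j ∈ S, v.1 j = u.1 j := by
  have hopen : IsOpen {v : Discontinuum A Q B | ∀ j ∈ S, v.1 j = u.1 j} := by
    have he : {v : Discontinuum A Q B | ∀ j ∈ S, v.1 j = u.1 j}
        = ⋂ j ∈ S, {v | v.1 j = u.1 j} := by ext; simp
    rw [he]; exact isOpen_biInter_finset (fun j _ => isOpen_coordEq j _)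
  exact hopen.mem_nhds (by simp)

-- The concrete automaton
abbrev AA : Type := Bool × Bool
abbrev QQ : Type := Option (Bool × Bool)
abbrev BB : Type := Option (Bool × Bool)
abbrev XX : Type := Discontinuum AA QQ BB

def fAd : QQ × AA → QQ := fun qa =>
  match qa.1 with
  | none => none
  | some _ => if qa.2.1 then some qa.2 else none

def fBd : QQ → BB := id

def dbit : AA ⊕ QQ ⊕ BB → Bool
  | .inl (_, d) => d
  | .inr (.inl (some (_, d))) => d
  | .inr (.inl none) => false
  | .inr (.inr (some (_, d))) => d
  | .inr (.inr none) => false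

def cflag : AA ⊕ QQ ⊕ BB → Bool
  | .inl (c, _) => c
  | _ => true

def isJunk : AA ⊕ QQ ⊕ BB → Bool
  | .inr (.inr none) => true
  | _ => false

open Classical in
noncomputable def phi (E : II ≃ II) (u : XX) : II :=
  if _ : ∃ p : Bool × Bool, u.1 0 = Sum.inr (Sum.inl (some p)) then
    if hk : ∃ i : ℕ, cflag (u.1 ((i:ℤ)+1)) = false then
      pw E (-((Nat.find hk : ℤ)+1)) (Psi E (fun i => dbit (u.1 ((Nat.find hk : ℤ) - i))))
    else lo
  else
    if hm : ∃ i : ℕ, isJunk (u.1 (-((i:ℤ)+1))) = false then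
      pw E ((Nat.find hm : ℤ)) (Psi E (fun i => dbit (u.1 (-((Nat.find hm : ℤ) + 1 + i)))))
    else hi

section PhiEval
variable (E : II ≃ II)

open Classical in
lemma phi_live (u : XX) (p : Bool × Bool) (h0 : u.1 0 = Sum.inr (Sum.inl (some p))) (k : ℕ)
    (hflag : ∀ i : ℕ, i < k → cflag (u.1 ((i:ℤ)+1)) = true)
    (hcut : cflag (u.1 ((k:ℤ)+1)) = false) :
    phi E u = pw E (-((k:ℤ)+1)) (Psi E (fun i => dbit (u.1 ((k:ℤ) - i)))) := by
  have hex : ∃ i : ℕ, cflag (u.1 ((i:ℤ)+1)) = false := ⟨k, hcut⟩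
  rw [phi, dif_pos ⟨p, h0⟩, dif_pos hex]
  have hfind : Nat.find hex = k :=
    (Nat.find_eq_iff hex).2 ⟨hcut, fun n hn => by
      intro hc; rw [hflag n hn] at hc; exact Bool.noConfusion hc⟩
  rw [hfind]

open Classical in
lemma phi_live_inf (u : XX) (p : Bool × Bool) (h0 : u.1 0 = Sum.inr (Sum.inl (some p)))
    (hflag : ∀ i : ℕ, cflag (u.1 ((i:ℤ)+1)) = true) :
    phi E u = lo := by
  rw [phi, dif_pos ⟨p, h0⟩, dif_neg]
  rintro ⟨i, hi⟩
  rw [hflag i] at hi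
  exact Bool.noConfusion hi

open Classical in
lemma phi_dead (u : XX) (h0 : u.1 0 = Sum.inr (Sum.inl (none : QQ))) (m : ℕ)
    (hjunk : ∀ i : ℕ, i < m → isJunk (u.1 (-((i:ℤ)+1))) = true)
    (hstop : isJunk (u.1 (-((m:ℤ)+1))) = false) :
    phi E u = pw E ((m:ℤ)) (Psi E (fun i => dbit (u.1 (-((m:ℤ) + 1 + i))))) := by
  have hnl : ¬ ∃ p : Bool × Bool, u.1 0 = Sum.inr (Sum.inl (some p)) := by
    rintro ⟨p, hp⟩; rw [h0] at hp; simp at hp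
  have hex : ∃ i : ℕ, isJunk (u.1 (-((i:ℤ)+1))) = false := ⟨m, hstop⟩
  rw [phi, dif_neg hnl, dif_pos hex]
  have hfind : Nat.find hex = m :=
    (Nat.find_eq_iff hex).2 ⟨hstop, fun n hn => by
      intro hc; rw [hjunk n hn] at hc; exact Bool.noConfusion hc⟩
  rw [hfind]

open Classical in
lemma phi_dead_inf (u : XX) (h0 : u.1 0 = Sum.inr (Sum.inl (none : QQ)))
    (hjunk : ∀ i : ℕ, isJunk (u.1 (-((i:ℤ)+1))) = true) :
    phi E u = hi := by
  have hnl : ¬ ∃ p : Bool × Bool, u.1 0 = Sum.inr (Sum.inl (some p)) := by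
    rintro ⟨p, hp⟩; rw [h0] at hp; simp at hp
  rw [phi, dif_neg hnl, dif_neg]
  rintro ⟨i, hi⟩
  rw [hjunk i] at hi
  exact Bool.noConfusion hi

end PhiEval

open Classical in
lemma phi_aut (E : II ≃ II) (hlo : E lo = lo) (hhi : E hi = hi) (u : XX) :
    phi E (autMap fAd fBd u) = E (phi E u) := by
  classical
  set v := autMap fAd fBd u with hv
  have hq : u.1 0 = Sum.inr (Sum.inl u.state) := u.2.2.1.choose_spec
  have ha : u.1 1 = Sum.inl u.input := (u.2.1 1 one_pos).choose_spec
  have hv_at : ∀ i : ℤ, v.1 i = if i = -1 then Sum.inr (Sum.inr (fBd u.state))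
      else if i = 0 then Sum.inr (Sum.inl (fAd (u.state, u.input)))
      else u.1 (i + 1) := fun i => rfl
  have hvm1 : v.1 (-1) = Sum.inr (Sum.inr (fBd u.state)) := by rw [hv_at]; norm_num
  have hv0 : v.1 0 = Sum.inr (Sum.inl (fAd (u.state, u.input))) := by rw [hv_at]; norm_num
  have hvo : ∀ i : ℤ, i ≠ -1 → i ≠ 0 → v.1 i = u.1 (i+1) := fun i h1 h2 => by
    rw [hv_at, if_neg h1, if_neg h2]
  rcases hain : u.input with ⟨a1, a2⟩
  cases hstate : u.state with
  | none =>
    have h0 : u.1 0 = Sum.inr (Sum.inl (none : QQ)) := by rw [hq, hstate]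
    have hv0' : v.1 0 = Sum.inr (Sum.inl (none : QQ)) := by rw [hv0, hstate]; rfl
    have hvm1' : v.1 (-1) = Sum.inr (Sum.inr (none : BB)) := by rw [hvm1, hstate]; rfl
    by_cases hm : ∃ i : ℕ, isJunk (u.1 (-((i:ℤ)+1))) = false
    · set m := Nat.find hm with hmdef
      have hstop : isJunk (u.1 (-((m:ℤ)+1))) = false := Nat.find_spec hm
      have hjunk : ∀ i : ℕ, i < m → isJunk (u.1 (-((i:ℤ)+1))) = true := fun i hi => by
        have := Nat.find_min hm hi; simpa using this
      have hjv : ∀ i : ℕ, i < m+1 → isJunk (v.1 (-((i:ℤ)+1))) = true := by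
        intro i hi
        rcases Nat.eq_zero_or_pos i with hz | hp
        · subst hz
          rw [show (-(((0:ℕ):ℤ)+1)) = -1 by norm_num, hvm1']
          rfl
        · obtain ⟨j, rfl⟩ : ∃ j, i = j+1 := ⟨i-1, by omega⟩
          rw [hvo (-(((j+1:ℕ):ℤ)+1)) (by push_cast; omega) (by push_cast; omega)]
          rw [show (-(((j+1:ℕ):ℤ)+1)+1) = -((j:ℤ)+1) by push_cast; ring]
          exact hjunk j (by omega)
      have hstopv : isJunk (v.1 (-(((m+1:ℕ):ℤ)+1))) = false := by
        rw [hvo (-(((m+1:ℕ):ℤ)+1)) (by push_cast; omega) (by push_cast; omega)]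
        rw [show (-(((m+1:ℕ):ℤ)+1)+1) = -((m:ℤ)+1) by push_cast; ring]
        exact hstop
      rw [phi_dead E u h0 m hjunk hstop, phi_dead E v hv0' (m+1) hjv hstopv]
      have hdata : (fun i : ℕ => dbit (v.1 (-(((m+1:ℕ):ℤ) + 1 + i))))
          = fun i : ℕ => dbit (u.1 (-((m:ℤ) + 1 + i))) := by
        funext i
        rw [hvo (-(((m+1:ℕ):ℤ) + 1 + i)) (by push_cast; omega) (by push_cast; omega)]
        congr 1
        push_cast; ring
      rw [hdata, show (((m+1:ℕ)):ℤ) = (m:ℤ)+1 by push_cast; ring, pw_succ]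
    · have hjall : ∀ i : ℕ, isJunk (u.1 (-((i:ℤ)+1))) = true := by
        intro i
        by_contra hc
        exact hm ⟨i, by simpa using hc⟩
      have hjallv : ∀ i : ℕ, isJunk (v.1 (-((i:ℤ)+1))) = true := by
        intro i
        rcases Nat.eq_zero_or_pos i with hz | hp
        · subst hz
          rw [show (-(((0:ℕ):ℤ)+1)) = -1 by norm_num, hvm1']
          rfl
        · obtain ⟨j, rfl⟩ : ∃ j, i = j+1 := ⟨i-1, by omega⟩
          rw [hvo (-(((j+1:ℕ):ℤ)+1)) (by push_cast; omega) (by push_cast; omega)]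
          rw [show (-(((j+1:ℕ):ℤ)+1)+1) = -((j:ℤ)+1) by push_cast; ring]
          exact hjall j
      rw [phi_dead_inf E u h0 hjall, phi_dead_inf E v hv0' hjallv, hhi]
  | some p =>
    have h0 : u.1 0 = Sum.inr (Sum.inl (some p)) := by rw [hq, hstate]
    have ha' : u.1 1 = Sum.inl (a1, a2) := by rw [ha, hain]
    cases a1 with
    | true =>
      have hv0' : v.1 0 = Sum.inr (Sum.inl (some ((true : Bool), a2))) := by
        rw [hv0, hstate, hain]; rfl
      have hvm1' : v.1 (-1) = Sum.inr (Sum.inr (some p)) := by rw [hvm1, hstate]; rfl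
      by_cases hk : ∃ i : ℕ, cflag (u.1 ((i:ℤ)+1)) = false
      · set k := Nat.find hk with hkdef
        have hcut : cflag (u.1 ((k:ℤ)+1)) = false := Nat.find_spec hk
        have hflag : ∀ i : ℕ, i < k → cflag (u.1 ((i:ℤ)+1)) = true := fun i hi => by
          have := Nat.find_min hk hi; simpa using this
        have hk0 : k ≠ 0 := by
          intro hz
          rw [hz] at hcut
          rw [show (((0:ℕ):ℤ)+1) = 1 by norm_num, ha'] at hcut
          exact Bool.noConfusion hcut
        obtain ⟨k', hkk⟩ : ∃ k', k = k'+1 := ⟨k-1, by omega⟩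
        have hkz : (k:ℤ) = (k':ℤ)+1 := by exact_mod_cast hkk
        have hflagv : ∀ i : ℕ, i < k' → cflag (v.1 ((i:ℤ)+1)) = true := by
          intro i hi
          rw [hvo ((i:ℤ)+1) (by omega) (by omega)]
          rw [show ((i:ℤ)+1+1) = ((i+1:ℕ):ℤ)+1 by push_cast; ring]
          exact hflag (i+1) (by omega)
        have hcutv : cflag (v.1 ((k':ℤ)+1)) = false := by
          rw [hvo ((k':ℤ)+1) (by omega) (by omega)]
          rw [show ((k':ℤ)+1+1) = (k:ℤ)+1 by omega]
          exact hcut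
        rw [phi_live E u p h0 k hflag hcut,
            phi_live E v ((true : Bool), a2) hv0' k' hflagv hcutv]
        have hdata : (fun i : ℕ => dbit (v.1 ((k':ℤ) - i)))
            = fun i : ℕ => dbit (u.1 ((k:ℤ) - i)) := by
          funext i
          by_cases h1 : 1 ≤ (k':ℤ) - i
          · rw [hvo ((k':ℤ) - i) (by omega) (by omega),
              show ((k':ℤ) - i + 1) = (k:ℤ) - i by omega]
          · by_cases h2 : (k':ℤ) - i = 0
            · rw [h2, hv0', show ((k:ℤ) - i) = 1 by omega, ha']
              rfl
            · by_cases h3 : (k':ℤ) - i = -1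
              · rw [h3, hvm1', show ((k:ℤ) - i) = 0 by omega, h0]
                rfl
              · rw [hvo ((k':ℤ) - i) h3 h2,
                  show ((k':ℤ) - i + 1) = (k:ℤ) - i by omega]
        rw [hdata, show (-((k':ℤ)+1)) = (-((k:ℤ)+1)) + 1 by omega, pw_succ]
      · have hall : ∀ i : ℕ, cflag (u.1 ((i:ℤ)+1)) = true := by
          intro i
          by_contra hc
          exact hk ⟨i, by simpa using hc⟩
        have hallv : ∀ i : ℕ, cflag (v.1 ((i:ℤ)+1)) = true := by
          intro i
          rw [hvo ((i:ℤ)+1) (by omega) (by omega)]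
          rw [show ((i:ℤ)+1+1) = ((i+1:ℕ):ℤ)+1 by push_cast; ring]
          exact hall (i+1)
        rw [phi_live_inf E u p h0 hall, phi_live_inf E v ((true : Bool), a2) hv0' hallv, hlo]
    | false =>
      have hv0' : v.1 0 = Sum.inr (Sum.inl (none : QQ)) := by
        rw [hv0, hstate, hain]; rfl
      have hvm1' : v.1 (-1) = Sum.inr (Sum.inr (some p)) := by rw [hvm1, hstate]; rfl
      have hcut0 : cflag (u.1 (((0:ℕ):ℤ)+1)) = false := by
        rw [show (((0:ℕ):ℤ)+1) = 1 by norm_num, ha']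
        rfl
      have hstop0 : isJunk (v.1 (-(((0:ℕ):ℤ)+1))) = false := by
        rw [show (-(((0:ℕ):ℤ)+1)) = -1 by norm_num, hvm1']
        rfl
      rw [phi_live E u p h0 0 (fun i hi => absurd hi (Nat.not_lt_zero i)) hcut0,
          phi_dead E v hv0' 0 (fun i hi => absurd hi (Nat.not_lt_zero i)) hstop0]
      have hdata : (fun i : ℕ => dbit (v.1 (-(((0:ℕ):ℤ) + 1 + i))))
          = fun i : ℕ => dbit (u.1 (((0:ℕ):ℤ) - i)) := by
        funext i
        rcases Nat.eq_zero_or_pos i with hz | hp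
        · subst hz
          rw [show (-(((0:ℕ):ℤ) + 1 + ((0:ℕ):ℤ))) = -1 by norm_num, hvm1',
            show ((((0:ℕ):ℤ)) - ((0:ℕ):ℤ)) = 0 by norm_num, h0]
          rfl
        · rw [hvo (-(((0:ℕ):ℤ) + 1 + i)) (by push_cast; omega) (by push_cast; omega)]
          congr 1
          push_cast; ring
      rw [hdata]
      have hps := pw_succ E (-1) (Psi E (fun i : ℕ => dbit (u.1 (((0:ℕ):ℤ) - i))))
      rw [show ((-1:ℤ)+1) = ((0:ℕ):ℤ) by norm_num] at hps
      exact hps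

lemma phi_cont (E : II ≃ II) (hSM : StrictMono ⇑E) (hcontE : Continuous ⇑E)
    (hlo : E lo = lo) (hhi : E hi = hi)
    (hup : ∀ y : II, y ≠ lo → y ≠ hi → y < E y) : Continuous (phi E) := by
  classical
  have hxsm := xx_strictMono E hlo hhi hup
  have hlt01 : (xx E 0).1 ≤ (xx E 1).1 := Subtype.coe_le_coe.2 (hxsm.monotone (by norm_num))
  rw [continuous_iff_continuousAt]
  intro u
  have hq : u.1 0 = Sum.inr (Sum.inl u.state) := u.2.2.1.choose_spec
  cases hstate : u.state with
  | some p =>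
    have h0 : u.1 0 = Sum.inr (Sum.inl (some p)) := by rw [hq, hstate]
    by_cases hk : ∃ i : ℕ, cflag (u.1 ((i:ℤ)+1)) = false
    · set k := Nat.find hk with hkdef
      have hcut : cflag (u.1 ((k:ℤ)+1)) = false := Nat.find_spec hk
      have hflag : ∀ i : ℕ, i < k → cflag (u.1 ((i:ℤ)+1)) = true := fun i hi => by
        have := Nat.find_min hk hi; simpa using this
      have heq : phi E =ᶠ[𝓝 u]
          (fun v : XX => pw E (-((k:ℤ)+1)) (Psi E (fun i => dbit (v.1 ((k:ℤ) - i))))) := by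
        filter_upwards [eventually_coords u (Finset.Icc (0:ℤ) ((k:ℤ)+1))] with v hv
        refine phi_live E v p ?_ k ?_ ?_
        · rw [hv 0 (by rw [Finset.mem_Icc]; omega)]; exact h0
        · intro i hi
          rw [hv ((i:ℤ)+1) (by rw [Finset.mem_Icc]; omega)]; exact hflag i hi
        · rw [hv ((k:ℤ)+1) (by rw [Finset.mem_Icc]; omega)]; exact hcut
      have hcont : Continuous
          (fun v : XX => pw E (-((k:ℤ)+1)) (Psi E (fun i => dbit (v.1 ((k:ℤ) - i))))) :=
        (pw_continuous E hcontE _).comp ((Psi_continuous E).comp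
          (continuous_pi (fun i => continuous_coordF ((k:ℤ) - i) dbit)))
      exact (continuousAt_congr heq).2 hcont.continuousAt
    · have hall : ∀ i : ℕ, cflag (u.1 ((i:ℤ)+1)) = true := by
        intro i; by_contra hc; exact hk ⟨i, by simpa using hc⟩
      have hphiu : phi E u = lo := phi_live_inf E u p h0 hall
      rw [ContinuousAt, hphiu, Metric.tendsto_nhds]
      intro ε hε
      obtain ⟨N, hN⟩ := exists_low E hcontE hlo hhi hup hε
      filter_upwards [eventually_coords u (Finset.Icc (0:ℤ) ((N:ℤ)+1))] with v hv
      have hv0 : v.1 0 = Sum.inr (Sum.inl (some p)) := by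
        rw [hv 0 (by rw [Finset.mem_Icc]; omega)]; exact h0
      have hvflag : ∀ i : ℕ, i ≤ N → cflag (v.1 ((i:ℤ)+1)) = true := by
        intro i hi
        rw [hv ((i:ℤ)+1) (by rw [Finset.mem_Icc]; omega)]; exact hall i
      by_cases hkv : ∃ i : ℕ, cflag (v.1 ((i:ℤ)+1)) = false
      · set kv := Nat.find hkv with hkvdef
        have hcutv : cflag (v.1 ((kv:ℤ)+1)) = false := Nat.find_spec hkv
        have hflagv : ∀ i : ℕ, i < kv → cflag (v.1 ((i:ℤ)+1)) = true := fun i hi => by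
          have := Nat.find_min hkv hi; simpa using this
        have hkvN : N + 1 ≤ kv := by
          rw [hkvdef, Nat.le_find_iff]
          intro m hm hc
          rw [hvflag m (by omega)] at hc
          exact Bool.noConfusion hc
        rw [phi_live E v p hv0 kv hflagv hcutv]
        set w := pw E (-((kv:ℤ)+1)) (Psi E (fun i => dbit (v.1 ((kv:ℤ) - i)))) with hw
        have hub : w ≤ xx E (-(kv:ℤ)) := by
          have hmem := (Psi_mem E hlt01 (fun i => dbit (v.1 ((kv:ℤ) - i)))).2
          have h1 := (pw_strictMono E hSM (-((kv:ℤ)+1))).monotone hmem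
          have h2 : pw E (-((kv:ℤ)+1)) (xx E 1) = xx E (-(kv:ℤ)) := by
            show pw E (-((kv:ℤ)+1)) (pw E 1 xz) = pw E (-(kv:ℤ)) xz
            rw [pw_add]; congr 1; ring
          rw [← h2]; exact h1
        have hxle : (xx E (-(kv:ℤ))).1 ≤ (xx E (-(N:ℤ))).1 :=
          Subtype.coe_le_coe.2 (hxsm.monotone (by omega))
        rw [Subtype.dist_eq, Real.dist_eq]
        have hwlb : (-1:ℝ) ≤ w.1 := w.2.1
        have hwub : w.1 ≤ (xx E (-(N:ℤ))).1 := le_trans hub hxle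
        rw [abs_lt]
        constructor
        · show -ε < w.1 - (lo : II).1
          have : (lo : II).1 = -1 := rfl
          rw [this]; linarith
        · show w.1 - (lo : II).1 < ε
          have : (lo : II).1 = -1 := rfl
          rw [this]; linarith
      · have hallv : ∀ i : ℕ, cflag (v.1 ((i:ℤ)+1)) = true := by
          intro i; by_contra hc; exact hkv ⟨i, by simpa using hc⟩
        rw [phi_live_inf E v p hv0 hallv]
        simpa using hε
  | none =>
    have h0 : u.1 0 = Sum.inr (Sum.inl (none : QQ)) := by rw [hq, hstate]
    by_cases hm : ∃ i : ℕ, isJunk (u.1 (-((i:ℤ)+1))) = false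
    · set m := Nat.find hm with hmdef
      have hstop : isJunk (u.1 (-((m:ℤ)+1))) = false := Nat.find_spec hm
      have hjunk : ∀ i : ℕ, i < m → isJunk (u.1 (-((i:ℤ)+1))) = true := fun i hi => by
        have := Nat.find_min hm hi; simpa using this
      have heq : phi E =ᶠ[𝓝 u]
          (fun v : XX => pw E ((m:ℤ)) (Psi E (fun i => dbit (v.1 (-((m:ℤ) + 1 + i)))))) := by
        filter_upwards [eventually_coords u (Finset.Icc (-((m:ℤ)+1)) 0)] with v hv
        refine phi_dead E v ?_ m ?_ ?_
        · rw [hv 0 (by rw [Finset.mem_Icc]; omega)]; exact h0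
        · intro i hi
          rw [hv (-((i:ℤ)+1)) (by rw [Finset.mem_Icc]; omega)]; exact hjunk i hi
        · rw [hv (-((m:ℤ)+1)) (by rw [Finset.mem_Icc]; omega)]; exact hstop
      have hcont : Continuous
          (fun v : XX => pw E ((m:ℤ)) (Psi E (fun i => dbit (v.1 (-((m:ℤ) + 1 + i)))))) :=
        (pw_continuous E hcontE _).comp ((Psi_continuous E).comp
          (continuous_pi (fun i => continuous_coordF (-((m:ℤ) + 1 + i)) dbit)))
      exact (continuousAt_congr heq).2 hcont.continuousAt
    · have hall : ∀ i : ℕ, isJunk (u.1 (-((i:ℤ)+1))) = true := by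
        intro i; by_contra hc; exact hm ⟨i, by simpa using hc⟩
      have hphiu : phi E u = hi := phi_dead_inf E u h0 hall
      rw [ContinuousAt, hphiu, Metric.tendsto_nhds]
      intro ε hε
      obtain ⟨N, hN⟩ := exists_high E hcontE hlo hhi hup hε
      filter_upwards [eventually_coords u (Finset.Icc (-((N:ℤ)+1)) 0)] with v hv
      have hv0 : v.1 0 = Sum.inr (Sum.inl (none : QQ)) := by
        rw [hv 0 (by rw [Finset.mem_Icc]; omega)]; exact h0
      have hvjunk : ∀ i : ℕ, i ≤ N → isJunk (v.1 (-((i:ℤ)+1))) = true := by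
        intro i hi
        rw [hv (-((i:ℤ)+1)) (by rw [Finset.mem_Icc]; omega)]; exact hall i
      by_cases hmv : ∃ i : ℕ, isJunk (v.1 (-((i:ℤ)+1))) = false
      · set mv := Nat.find hmv with hmvdef
        have hstopv : isJunk (v.1 (-((mv:ℤ)+1))) = false := Nat.find_spec hmv
        have hjunkv : ∀ i : ℕ, i < mv → isJunk (v.1 (-((i:ℤ)+1))) = true := fun i hi => by
          have := Nat.find_min hmv hi; simpa using this
        have hmvN : N + 1 ≤ mv := by
          rw [hmvdef, Nat.le_find_iff]
          intro j hj hc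
          rw [hvjunk j (by omega)] at hc
          exact Bool.noConfusion hc
        rw [phi_dead E v hv0 mv hjunkv hstopv]
        set w := pw E ((mv:ℤ)) (Psi E (fun i => dbit (v.1 (-((mv:ℤ) + 1 + i))))) with hw
        have hlb : xx E ((mv:ℤ)) ≤ w := by
          have hmem := (Psi_mem E hlt01 (fun i => dbit (v.1 (-((mv:ℤ) + 1 + i))))).1
          have h1 := (pw_strictMono E hSM ((mv:ℤ))).monotone hmem
          have h2 : pw E ((mv:ℤ)) (xx E 0) = xx E ((mv:ℤ)) := by
            show pw E ((mv:ℤ)) (pw E 0 xz) = pw E ((mv:ℤ)) xz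
            rw [pw_zero]
          rw [← h2]; exact h1
        have hxle : (xx E ((N:ℤ))).1 ≤ (xx E ((mv:ℤ))).1 :=
          Subtype.coe_le_coe.2 (hxsm.monotone (by omega))
        rw [Subtype.dist_eq, Real.dist_eq]
        have hwub : w.1 ≤ 1 := w.2.2
        have hwlb : (xx E ((N:ℤ))).1 ≤ w.1 := le_trans hxle hlb
        rw [abs_lt]
        constructor
        · show -ε < w.1 - (hi : II).1
          have : (hi : II).1 = 1 := rfl
          rw [this]; linarith
        · show w.1 - (hi : II).1 < ε
          have : (hi : II).1 = 1 := rfl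
          rw [this]; linarith
      · have hallv : ∀ i : ℕ, isJunk (v.1 (-((i:ℤ)+1))) = true := by
          intro i; by_contra hc; exact hmv ⟨i, by simpa using hc⟩
        rw [phi_dead_inf E v hv0 hallv]
        simpa using hε

noncomputable def mkc (L : ℕ → BB) (q : QQ) (R : ℕ → AA) : XX :=
  ⟨fun i => if 0 < i then Sum.inl (R (i-1).toNat)
    else if i = 0 then Sum.inr (Sum.inl q)
    else Sum.inr (Sum.inr (L (-(i+1)).toNat)), by
    refine ⟨fun i hi => ⟨R (i-1).toNat, by simp only []; rw [if_pos hi]⟩,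
      ⟨q, by norm_num⟩, fun i hi => ?_⟩
    exact ⟨L (-(i+1)).toNat, by simp only []; rw [if_neg (by omega), if_neg (by omega)]⟩⟩

lemma mkc_pos (L : ℕ → BB) (q : QQ) (R : ℕ → AA) (i : ℕ) :
    (mkc L q R).1 ((i:ℤ)+1) = Sum.inl (R i) := by
  show (if 0 < (i:ℤ)+1 then Sum.inl (R (((i:ℤ)+1)-1).toNat) else _) = _
  rw [if_pos (by omega)]
  congr 1
  rw [show ((i:ℤ)+1-1) = (i:ℤ) by ring, Int.toNat_natCast]

lemma mkc_zero (L : ℕ → BB) (q : QQ) (R : ℕ → AA) :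
    (mkc L q R).1 0 = Sum.inr (Sum.inl q) := by
  show (if (0:ℤ) < 0 then Sum.inl (R ((0:ℤ)-1).toNat)
    else if (0:ℤ) = 0 then Sum.inr (Sum.inl q)
    else Sum.inr (Sum.inr (L (-((0:ℤ)+1)).toNat))) = Sum.inr (Sum.inl q)
  rw [if_neg (by omega), if_pos rfl]

lemma mkc_neg (L : ℕ → BB) (q : QQ) (R : ℕ → AA) (i : ℕ) :
    (mkc L q R).1 (-((i:ℤ)+1)) = Sum.inr (Sum.inr (L i)) := by
  show (if 0 < -((i:ℤ)+1) then Sum.inl (R ((-((i:ℤ)+1))-1).toNat)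
    else if -((i:ℤ)+1) = 0 then Sum.inr (Sum.inl q)
    else Sum.inr (Sum.inr (L (-((-((i:ℤ)+1))+1)).toNat))) = Sum.inr (Sum.inr (L i))
  rw [if_neg (by omega), if_neg (by omega)]
  congr 1
  rw [show (-((-((i:ℤ)+1))+1)) = (i:ℤ) by ring, Int.toNat_natCast]

lemma phi_surj (E : II ≃ II) (hSM : StrictMono ⇑E) (hcontE : Continuous ⇑E)
    (hlo : E lo = lo) (hhi : E hi = hi)
    (hup : ∀ y : II, y ≠ lo → y ≠ hi → y < E y) : Surjective (phi E) := by
  classical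
  intro y
  have hxsm := xx_strictMono E hlo hhi hup
  have hlt01 : (xx E 0).1 < (xx E 1).1 := Subtype.coe_lt_coe.2 (hxsm (by norm_num))
  by_cases hyhi : y = hi
  · refine ⟨mkc (fun _ => none) none (fun _ => (true, false)), ?_⟩
    rw [phi_dead_inf E _ (mkc_zero _ _ _) (fun i => by rw [mkc_neg]; rfl), hyhi]
  by_cases hylo : y = lo
  · refine ⟨mkc (fun _ => none) (some (true, false)) (fun _ => (true, false)), ?_⟩
    rw [phi_live_inf E _ (true, false) (mkc_zero _ _ _) (fun i => by rw [mkc_pos]; rfl), hylo]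
  have hy1 : y.1 < 1 := lt_of_le_of_ne y.2.2 (fun h => hyhi (Subtype.ext h))
  have hy0 : (-1:ℝ) < y.1 := lt_of_le_of_ne y.2.1 (fun h => hylo (Subtype.ext h.symm))
  obtain ⟨N1, hN1⟩ := exists_high E hcontE hlo hhi hup (ε := 1 - y.1) (by linarith)
  obtain ⟨N0, hN0⟩ := exists_low E hcontE hlo hhi hup (ε := y.1 + 1) (by linarith)
  have hbdd : ∀ z : ℤ, xx E z ≤ y → z ≤ (N1:ℤ) := by
    intro z hz
    by_contra hzz
    push_neg at hzz
    have h1 : xx E (N1:ℤ) ≤ xx E z := hxsm.monotone (by omega)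
    have h2 : (xx E (N1:ℤ)).1 ≤ y.1 := le_trans (Subtype.coe_le_coe.2 h1) hz
    linarith
  obtain ⟨n, hn, hngreat⟩ := Int.exists_greatest_of_bdd ⟨(N1:ℤ), hbdd⟩
    ⟨-(N0:ℤ), le_of_lt (Subtype.coe_lt_coe.1 (by exact_mod_cast (by linarith : (xx E (-(N0:ℤ))).1 < y.1)))⟩
  have hlt : y < xx E (n+1) := by
    by_contra hcon
    push_neg at hcon
    have := hngreat (n+1) hcon
    omega
  set z := pw E (-n) y with hzdef
  have hz0 : xx E 0 ≤ z := by
    have h1 := (pw_strictMono E hSM (-n)).monotone hn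
    have h2 : pw E (-n) (xx E n) = xx E 0 := by
      show pw E (-n) (pw E n xz) = pw E 0 xz
      rw [pw_cancel, pw_zero]
    rw [← h2]; exact h1
  have hz1 : z ≤ xx E 1 := by
    have h1 := (pw_strictMono E hSM (-n)).monotone hlt.le
    have h2 : pw E (-n) (xx E (n+1)) = xx E 1 := by
      show pw E (-n) (pw E (n+1) xz) = pw E 1 xz
      rw [pw_add]; congr 1; ring
    rw [← h2]; exact h1
  obtain ⟨b, hb⟩ := Psi_surj E hlt01 z hz0 hz1
  rcases le_or_gt 0 n with hpos | hneg
  · -- dead configuration with junk run of length n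
    set m := n.toNat with hmdef
    have hmz : (m:ℤ) = n := Int.toNat_of_nonneg hpos
    set L : ℕ → BB := fun j => if j < m then none else some (false, b (j - m)) with hL
    refine ⟨mkc L none (fun _ => (true, false)), ?_⟩
    have hjunk : ∀ i : ℕ, i < m → isJunk ((mkc L none fun _ => (true, false)).1 (-((i:ℤ)+1))) = true := by
      intro i hi
      rw [mkc_neg, hL]
      simp only [if_pos hi]
      rfl
    have hstop : isJunk ((mkc L none fun _ => (true, false)).1 (-((m:ℤ)+1))) = false := by
      rw [mkc_neg, hL]
      simp only [if_neg (lt_irrefl m)]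
      rfl
    rw [phi_dead E _ (mkc_zero _ _ _) m hjunk hstop]
    have hdata : (fun i : ℕ => dbit ((mkc L none fun _ => (true, false)).1 (-((m:ℤ) + 1 + i)))) = b := by
      funext i
      rw [show (-((m:ℤ) + 1 + i)) = -(((m + i : ℕ):ℤ)+1) by push_cast; ring, mkc_neg, hL]
      simp only [if_neg (by omega : ¬ (m + i < m))]
      rw [show (m + i - m) = i by omega]
      rfl
    rw [hdata, hb, hzdef]
    rw [show pw E ((m:ℤ)) (pw E (-n) y) = pw E ((m:ℤ) + -n) y from pw_add E _ _ y,
      show ((m:ℤ) + -n) = 0 by omega, pw_zero]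
  · -- live configuration with countdown k+1 = -n
    set k := (-n-1).toNat with hk
    have hkz : (k:ℤ) = -n-1 := Int.toNat_of_nonneg (by omega)
    set L : ℕ → BB := fun j => some (false, b (k+1+j)) with hL
    set R : ℕ → AA := fun j => if j < k then (true, b (k-1-j))
      else if j = k then (false, false) else (true, false) with hR
    refine ⟨mkc L (some (true, b k)) R, ?_⟩
    have hflag : ∀ i : ℕ, i < k → cflag ((mkc L (some (true, b k)) R).1 ((i:ℤ)+1)) = true := by
      intro i hi
      rw [mkc_pos, hR]
      simp only [if_pos hi]
      rfl
    have hcut : cflag ((mkc L (some (true, b k)) R).1 ((k:ℤ)+1)) = false := by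
      rw [mkc_pos, hR]
      simp only [if_neg (lt_irrefl k), if_pos rfl]
      rfl
    rw [phi_live E _ (true, b k) (mkc_zero _ _ _) k hflag hcut]
    have hdata : (fun i : ℕ => dbit ((mkc L (some (true, b k)) R).1 ((k:ℤ) - i))) = b := by
      funext i
      rcases lt_trichotomy i k with hik | hik | hik
      · rw [show ((k:ℤ) - i) = (((k - 1 - i : ℕ)):ℤ) + 1 by push_cast; omega, mkc_pos, hR]
        simp only [if_pos (by omega : k - 1 - i < k)]
        rw [show (k - 1 - (k - 1 - i)) = i by omega]
        rfl
      · rw [show ((k:ℤ) - i) = 0 by omega, mkc_zero, hik]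
        rfl
      · rw [show ((k:ℤ) - i) = -((((i - k - 1 : ℕ)):ℤ) + 1) by push_cast; omega, mkc_neg, hL]
        beta_reduce
        rw [show (k + 1 + (i - k - 1)) = i by omega]
        rfl
    rw [hdata, hb, hzdef]
    rw [show pw E (-((k:ℤ)+1)) (pw E (-n) y) = pw E (-((k:ℤ)+1) + -n) y from pw_add E _ _ y,
      show (-((k:ℤ)+1) + -n) = 0 by omega, pw_zero]


/-- An increasing continuous map of `[-1,1]` with `g(x) > x` exactly on `(-1,1)`
is a factor of a finite automaton. -/
theorem increasing_isFactorOfFiniteAutomaton (g : ℝ → ℝ)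
    (hc : ContinuousOn g (Set.Icc (-1) 1))
    (hmono : StrictMonoOn g (Set.Icc (-1) 1))
    (hmaps : Set.MapsTo g (Set.Icc (-1) 1) (Set.Icc (-1) 1))
    (hgt : ∀ x ∈ Set.Icc (-1:ℝ) 1, (x < g x ↔ x ∈ Set.Ioo (-1:ℝ) 1)) :
    IsFactorOfFiniteAutomaton (Set.MapsTo.restrict g _ _ hmaps) := by
  have hm1 : g (-1) = -1 := by
    have h := hgt (-1) (by norm_num)
    have h2 : ¬ ((-1:ℝ) ∈ Set.Ioo (-1:ℝ) 1) := by norm_num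
    have h3 : ¬ ((-1:ℝ) < g (-1)) := fun hcc => h2 (h.1 hcc)
    push_neg at h3
    have h4 := (hmaps (by norm_num : (-1:ℝ) ∈ Set.Icc (-1:ℝ) 1)).1
    linarith
  have hp1 : g 1 = 1 := by
    have h := hgt 1 (by norm_num)
    have h2 : ¬ ((1:ℝ) ∈ Set.Ioo (-1:ℝ) 1) := by norm_num
    have h3 : ¬ ((1:ℝ) < g 1) := fun hcc => h2 (h.1 hcc)
    push_neg at h3
    by_contra hne
    have hlt : g 1 < 1 := lt_of_le_of_ne h3 hne
    have h0mem : (0:ℝ) ∈ Set.Icc (-1:ℝ) 1 := by norm_num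
    have hg0 : 0 < g 0 := (hgt 0 h0mem).2 (by norm_num)
    have hg0le : g 0 < g 1 := hmono h0mem (by norm_num) (by norm_num)
    have hmem : g 1 ∈ Set.Icc (-1:ℝ) 1 := hmaps (by norm_num)
    have hioo : g 1 ∈ Set.Ioo (-1:ℝ) 1 := ⟨by linarith, hlt⟩
    have hx := (hgt (g 1) hmem).2 hioo
    have hgg : g (g 1) < g 1 := hmono hmem (by norm_num) hlt
    linarith
  set Gr : II → II := Set.MapsTo.restrict g _ _ hmaps with hGr
  have hinj : Injective Gr := fun a b hab =>
    Subtype.ext (hmono.injOn a.2 b.2 (congrArg Subtype.val hab))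
  have hsurjG : Surjective Gr := by
    intro y
    have hy : y.1 ∈ Set.Icc (g (-1)) (g 1) := by rw [hm1, hp1]; exact y.2
    obtain ⟨x, hx, hgx⟩ := intermediate_value_Icc (by norm_num : (-1:ℝ) ≤ 1) hc hy
    exact ⟨⟨x, hx⟩, Subtype.ext hgx⟩
  set E : II ≃ II := Equiv.ofBijective Gr ⟨hinj, hsurjG⟩ with hE
  have hSM : StrictMono ⇑E := by
    intro a b hab
    rw [← Subtype.coe_lt_coe]
    exact hmono a.2 b.2 (Subtype.coe_lt_coe.2 hab)
  have hcontE : Continuous ⇑E := hc.mapsToRestrict hmaps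
  have hlo' : E lo = lo := Subtype.ext hm1
  have hhi' : E hi = hi := Subtype.ext hp1
  have hup : ∀ y : II, y ≠ lo → y ≠ hi → y < E y := by
    intro y h1 h2
    have hy0 : (-1:ℝ) < y.1 := lt_of_le_of_ne y.2.1 (fun h => h1 (Subtype.ext h.symm))
    have hy1 : y.1 < 1 := lt_of_le_of_ne y.2.2 (fun h => h2 (Subtype.ext h))
    rw [← Subtype.coe_lt_coe]
    exact (hgt y.1 y.2).2 ⟨hy0, hy1⟩
  refine ⟨AA, QQ, BB, inferInstance, inferInstance, inferInstance,
    ⟨(true, true)⟩, ⟨none⟩, ⟨none⟩, fAd, fBd, phi E,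
    phi_cont E hSM hcontE hlo' hhi' hup, phi_surj E hSM hcontE hlo' hhi' hup, ?_⟩
  funext u
  show Gr (phi E u) = phi E (autMap fAd fBd u)
  rw [phi_aut E hlo' hhi' u]
  rfl
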